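/- Let R be a unique factorization domain whose fraction field has characteristic different from two. Let f(x) = x² − ax + b and g(y) = y² − cy + d with a, b, c, d ∈ R, set T = R[x,y]/(f, g), and suppose f is irreducible in R[x]. Suppose e ∈ R satisfies c² − 4d = e²(a² − 4b), and let w₁, w₂ ∈ R be such that 2w₁ = c − ae and 2w₂ = c + ae. Then the minimal primes of T are exactly the two principal ideals P₁ = (h̄₁) and P₂ = (h̄₂), where h̄₁, h̄₂ are the classes in T of the linear polynomials h₁(x,y) = y − ex − w₁ and h₂(x,y) = y + ex − w₂; moreover T/Pⱼ ≅ R[x]/(f) as R-algebras for j = 1, 2. -/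

import Mathlib

open MvPolynomial

noncomputable section

/-- The ideal `(f, g) = (x² − ax + b, y² − cy + d)` in `R[x,y]`. -/
abbrev quadIdeal (R : Type) [CommRing R] (a b c d : R) : Ideal (MvPolynomial (Fin 2) R) :=
  Ideal.span {(X 0 : MvPolynomial (Fin 2) R) ^ 2 - C a * X 0 + C b,
    (X 1 : MvPolynomial (Fin 2) R) ^ 2 - C c * X 1 + C d}

/-- `T = R[x,y]/(f, g)`. -/
abbrev quadQuot (R : Type) [CommRing R] (a b c d : R) : Type :=
  MvPolynomial (Fin 2) R ⧸ quadIdeal R a b c d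

abbrev fp {R : Type} [CommRing R] (a b : R) : Polynomial R :=
  Polynomial.X ^ 2 - Polynomial.C a * Polynomial.X + Polynomial.C b

variable {R : Type} [CommRing R]


/-- x ↦ root, y ↦ u·root + v -/
def phi (a b u v : R) : MvPolynomial (Fin 2) R →ₐ[R] AdjoinRoot (fp a b) :=
  aeval ![AdjoinRoot.root (fp a b),
    algebraMap R _ u * AdjoinRoot.root (fp a b) + algebraMap R _ v]

lemma phi_F (a b u v : R) :
    phi a b u v ((X 0 : MvPolynomial (Fin 2) R) ^ 2 - C a * X 0 + C b) = 0 := by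
  have h2 : AdjoinRoot.mk (fp a b) (fp a b) = 0 := AdjoinRoot.mk_self
  simp only [fp, map_sub, map_add, map_mul, map_pow, AdjoinRoot.mk_X, AdjoinRoot.mk_C] at h2
  simp only [phi, map_sub, map_add, map_mul, map_pow, aeval_X, aeval_C,
    Matrix.cons_val_zero, AdjoinRoot.algebraMap_eq]
  exact h2

lemma phi_H (a b u v : R) :
    phi a b u v (X 1 - C u * X 0 - C v) = 0 := by
  simp [phi]

lemma phi_lin (a b u v s t : R) :
    phi a b u v (X 1 - C s * X 0 - C t) =
      AdjoinRoot.mk (fp a b) (Polynomial.C (u - s) * Polynomial.X + Polynomial.C (v - t)) := by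
  simp [phi, AdjoinRoot.algebraMap_eq, map_sub, map_add, map_mul, AdjoinRoot.mk_X, AdjoinRoot.mk_C]
  ring

lemma span_le_ker (a b u v : R) :
    Ideal.span {(X 0 : MvPolynomial (Fin 2) R) ^ 2 - C a * X 0 + C b,
      X 1 - C u * X 0 - C v} ≤ RingHom.ker (phi a b u v) := by
  rw [Ideal.span_le]
  rintro p (rfl | rfl)
  · exact phi_F a b u v
  · exact phi_H a b u v

/-- the iso `R[x,y]/(F,H) ≃ AdjoinRoot f` -/
def quotEquiv (a b u v : R) :
    (MvPolynomial (Fin 2) R ⧸ Ideal.span {(X 0 : MvPolynomial (Fin 2) R) ^ 2 - C a * X 0 + C b,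
      X 1 - C u * X 0 - C v}) ≃ₐ[R] AdjoinRoot (fp a b) := by
  set I₀ : Ideal (MvPolynomial (Fin 2) R) :=
    Ideal.span {(X 0 : MvPolynomial (Fin 2) R) ^ 2 - C a * X 0 + C b, X 1 - C u * X 0 - C v}
    with hI₀
  have hFmem : ((X 0 : MvPolynomial (Fin 2) R) ^ 2 - C a * X 0 + C b) ∈ I₀ :=
    Ideal.subset_span (Set.mem_insert _ _)
  have hHmem : (X 1 - C u * X 0 - C v : MvPolynomial (Fin 2) R) ∈ I₀ :=
    Ideal.subset_span (Set.mem_insert_of_mem _ rfl)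
  have haev : Polynomial.aeval (Ideal.Quotient.mk I₀ (X 0)) (fp a b) = 0 := by
    have h1 : Polynomial.aeval (Ideal.Quotient.mk I₀ (X 0)) (fp a b)
        = Ideal.Quotient.mk I₀ ((X 0 : MvPolynomial (Fin 2) R) ^ 2 - C a * X 0 + C b) := by
      simp only [fp, map_sub, map_add, map_mul, map_pow, Polynomial.aeval_X, Polynomial.aeval_C,
        ← Ideal.Quotient.mk_algebraMap, MvPolynomial.algebraMap_eq]
    rw [h1, Ideal.Quotient.eq_zero_iff_mem]
    exact hFmem
  have haev' : Polynomial.eval₂ (↑(Algebra.ofId R (MvPolynomial (Fin 2) R ⧸ I₀)))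
      (Ideal.Quotient.mk I₀ (X 0)) (fp a b) = 0 := haev
  refine AlgEquiv.ofAlgHom
    (Ideal.Quotient.liftₐ I₀ (phi a b u v) (fun x hx => span_le_ker a b u v hx))
    (AdjoinRoot.liftAlgHom (fp a b) (Algebra.ofId R _) (Ideal.Quotient.mk I₀ (X 0)) haev') ?_ ?_
  · apply AdjoinRoot.algHom_ext
    simp [AdjoinRoot.liftAlgHom_root, Ideal.Quotient.liftₐ_apply, phi]
    exact aeval_X (R := R) _ 0
  · apply Ideal.Quotient.algHom_ext
    apply MvPolynomial.algHom_ext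
    intro i
    fin_cases i
    · simp [Ideal.Quotient.liftₐ_apply, phi, AdjoinRoot.liftAlgHom_root]
      have h0 : (Ideal.Quotient.liftₐ I₀ (phi a b u v) (fun x hx => span_le_ker a b u v hx))
          (Ideal.Quotient.mk I₀ (X 0)) = AdjoinRoot.root (fp a b) := aeval_X (R := R) _ 0
      exact (congrArg (AdjoinRoot.liftAlgHom (fp a b) (Algebra.ofId R _)
        (Ideal.Quotient.mk I₀ (X 0)) haev') h0).trans (AdjoinRoot.liftAlgHom_root _ _ _ _)
    · simp only [AlgHom.comp_apply, Ideal.Quotient.mkₐ_eq_mk, Ideal.Quotient.liftₐ_apply,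
        Ideal.Quotient.lift_mk, AlgHom.coe_id, id_eq]
      have h1 : phi a b u v (X 1) =
          algebraMap R _ u * AdjoinRoot.root (fp a b) + algebraMap R _ v := by simp [phi]
      have h2 : (AdjoinRoot.liftAlgHom (fp a b) (Algebra.ofId R _) (Ideal.Quotient.mk I₀ (X 0)) haev')
          (phi a b u v (X 1)) = Ideal.Quotient.mk I₀ (X 1) := by
        have key : Ideal.Quotient.mk I₀ (C u * X 0 + C v : MvPolynomial (Fin 2) R)
            = Ideal.Quotient.mk I₀ (X 1) := by
          rw [Ideal.Quotient.eq]
          have h3 : (C u * X 0 + C v - X 1 : MvPolynomial (Fin 2) R)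
              = -(X 1 - C u * X 0 - C v) := by ring
          rw [h3]; exact neg_mem hHmem
        rw [h1, map_add, map_mul, AlgHom.commutes, AlgHom.commutes, AdjoinRoot.liftAlgHom_root,
          ← Ideal.Quotient.mk_algebraMap, ← Ideal.Quotient.mk_algebraMap, ← map_mul, ← map_add]
        exact key
      exact h2

/-- `T/(H̄) ≃ AdjoinRoot f`, given `G ∈ (F, H)`. -/
def quotQuotEquiv (a b c d u v : R)
    (hG : ((X 1 : MvPolynomial (Fin 2) R) ^ 2 - C c * X 1 + C d) ∈
      Ideal.span {(X 0 : MvPolynomial (Fin 2) R) ^ 2 - C a * X 0 + C b, X 1 - C u * X 0 - C v}) :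
    ((MvPolynomial (Fin 2) R ⧸ quadIdeal R a b c d) ⧸
      (Ideal.span {Ideal.Quotient.mk (quadIdeal R a b c d) (X 1 - C u * X 0 - C v)} :
        Ideal (MvPolynomial (Fin 2) R ⧸ quadIdeal R a b c d))) ≃ₐ[R] AdjoinRoot (fp a b) := by
  set I := quadIdeal R a b c d with hI
  set H : MvPolynomial (Fin 2) R := X 1 - C u * X 0 - C v with hH
  set I₀ : Ideal (MvPolynomial (Fin 2) R) :=
    Ideal.span {(X 0 : MvPolynomial (Fin 2) R) ^ 2 - C a * X 0 + C b, H} with hI₀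
  have hmap : (Ideal.span {Ideal.Quotient.mk I H} : Ideal (MvPolynomial (Fin 2) R ⧸ I))
      = Ideal.map (Ideal.Quotient.mkₐ R I) (Ideal.span {H}) := by
    rw [Ideal.map_span, Set.image_singleton, Ideal.Quotient.mkₐ_eq_mk]
  have hsup : I ⊔ Ideal.span {H} = I₀ := by
    apply le_antisymm
    · apply sup_le
      · rw [hI, Ideal.span_le]
        rintro p (rfl | rfl)
        · exact Ideal.subset_span (Set.mem_insert _ _)
        · exact hG
      · rw [Ideal.span_le]
        rintro p rfl
        exact Ideal.subset_span (Set.mem_insert_of_mem _ rfl)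
    · rw [Ideal.span_le]
      rintro p (rfl | rfl)
      · exact le_sup_left (α := Ideal (MvPolynomial (Fin 2) R))
          (Ideal.subset_span (Set.mem_insert _ _))
      · exact le_sup_right (α := Ideal (MvPolynomial (Fin 2) R))
          (Ideal.subset_span rfl)
  exact (Ideal.quotientEquivAlgOfEq R hmap).trans
    ((DoubleQuot.quotQuotEquivQuotSupₐ R I (Ideal.span {H})).trans
      ((Ideal.quotientEquivAlgOfEq R hsup).trans (quotEquiv a b u v)))

lemma adjoinRoot_isDomain [IsDomain R] [UniqueFactorizationMonoid R] (a b : R)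
    (hf : Irreducible (fp a b)) : IsDomain (AdjoinRoot (fp a b)) := by
  have hprime : Prime (fp a b) := (UniqueFactorizationMonoid.irreducible_iff_prime).mp hf
  have hsp : (Ideal.span {fp a b}).IsPrime :=
    (Ideal.span_singleton_prime hprime.ne_zero).mpr hprime
  exact (Ideal.Quotient.isDomain_iff_prime _).mpr hsp

lemma span_mk_isPrime [IsDomain R] [UniqueFactorizationMonoid R] (a b c d u v : R)
    (hf : Irreducible (fp a b))
    (hG : ((X 1 : MvPolynomial (Fin 2) R) ^ 2 - C c * X 1 + C d) ∈
      Ideal.span {(X 0 : MvPolynomial (Fin 2) R) ^ 2 - C a * X 0 + C b, X 1 - C u * X 0 - C v}) :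
    (Ideal.span {Ideal.Quotient.mk (quadIdeal R a b c d) (X 1 - C u * X 0 - C v)} :
      Ideal (MvPolynomial (Fin 2) R ⧸ quadIdeal R a b c d)).IsPrime := by
  have : IsDomain (AdjoinRoot (fp a b)) := adjoinRoot_isDomain a b hf
  have hdom : IsDomain ((MvPolynomial (Fin 2) R ⧸ quadIdeal R a b c d) ⧸
      (Ideal.span {Ideal.Quotient.mk (quadIdeal R a b c d) (X 1 - C u * X 0 - C v)} :
        Ideal (MvPolynomial (Fin 2) R ⧸ quadIdeal R a b c d))) :=
    Function.Injective.isDomain (quotQuotEquiv a b c d u v hG).toRingEquiv.toRingHom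
      (quotQuotEquiv a b c d u v hG).injective
  exact (Ideal.Quotient.isDomain_iff_prime _).mp hdom

lemma mem_of_mk_mem (a b c d u v : R) (p : MvPolynomial (Fin 2) R)
    (hG : ((X 1 : MvPolynomial (Fin 2) R) ^ 2 - C c * X 1 + C d) ∈
      Ideal.span {(X 0 : MvPolynomial (Fin 2) R) ^ 2 - C a * X 0 + C b, X 1 - C u * X 0 - C v})
    (hmem : Ideal.Quotient.mk (quadIdeal R a b c d) p ∈
      Ideal.span {Ideal.Quotient.mk (quadIdeal R a b c d) (X 1 - C u * X 0 - C v)}) :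
    p ∈ Ideal.span {(X 0 : MvPolynomial (Fin 2) R) ^ 2 - C a * X 0 + C b,
      X 1 - C u * X 0 - C v} := by
  set I := quadIdeal R a b c d with hI
  set H : MvPolynomial (Fin 2) R := X 1 - C u * X 0 - C v with hH
  have hmap : (Ideal.span {Ideal.Quotient.mk I H} : Ideal (MvPolynomial (Fin 2) R ⧸ I))
      = (Ideal.span {H}).map (Ideal.Quotient.mk I) := by
    rw [Ideal.map_span, Set.image_singleton]
  rw [hmap] at hmem
  have hp : p ∈ Ideal.span {H} ⊔ I := Ideal.mem_quotient_iff_mem_sup.mp hmem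
  have hle : Ideal.span {H} ⊔ I ≤
      Ideal.span {(X 0 : MvPolynomial (Fin 2) R) ^ 2 - C a * X 0 + C b, H} := by
    apply sup_le
    · rw [Ideal.span_le]
      rintro q rfl
      exact Ideal.subset_span (Set.mem_insert_of_mem _ rfl)
    · rw [hI, Ideal.span_le]
      rintro q (rfl | rfl)
      · exact Ideal.subset_span (Set.mem_insert _ _)
      · exact hG
  exact hle hp

lemma eq_zero_of_mk_lin_eq_zero [IsDomain R] (a b s t : R)
    (h : AdjoinRoot.mk (fp a b) (Polynomial.C s * Polynomial.X + Polynomial.C t) = 0) :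
    s = 0 := by
  by_contra hs
  have hdvd := AdjoinRoot.mk_eq_zero.mp h
  have hne : (Polynomial.C s * Polynomial.X + Polynomial.C t : Polynomial R) ≠ 0 := by
    intro h0
    apply hs
    have := congrArg (fun q => Polynomial.coeff q 1) h0
    simpa using this
  have h1 := Polynomial.natDegree_le_of_dvd hdvd hne
  have h2 : (fp a b).natDegree = 2 := by
    have hfp : fp a b = Polynomial.X ^ 2 + Polynomial.C (-a) * Polynomial.X + Polynomial.C b := by
      push_cast [map_neg]; ring
    rw [hfp]; compute_degree!
  have h3 : (Polynomial.C s * Polynomial.X + Polynomial.C t).natDegree ≤ 1 := by compute_degree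
  omega

/-- Let `R` be a UFD whose fraction field has characteristic `≠ 2`, let
`f(x) = x² − ax + b` and `g(y) = y² − cy + d`, set `T = R[x,y]/(f, g)`, and suppose
`f` is irreducible in `R[x]`.  Suppose `e ∈ R` satisfies `c² − 4d = e²(a² − 4b)` and
`w₁, w₂ ∈ R` satisfy `2w₁ = c − ae`, `2w₂ = c + ae`.  Then the minimal primes of `T`
are exactly the principal ideals `P₁ = (h̄₁)`, `P₂ = (h̄₂)` generated by the classes
of `h₁ = y − ex − w₁` and `h₂ = y + ex − w₂`, and `T/Pⱼ ≅ R[x]/(f)` as `R`-algebras. -/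
theorem stmt9 (R : Type) [CommRing R] [IsDomain R] [UniqueFactorizationMonoid R]
    (hchar : ringChar (FractionRing R) ≠ 2)
    (a b c d : R)
    (hf : Irreducible (Polynomial.X ^ 2 - Polynomial.C a * Polynomial.X +
      Polynomial.C b : Polynomial R))
    (e w₁ w₂ : R)
    (he : c ^ 2 - 4 * d = e ^ 2 * (a ^ 2 - 4 * b))
    (hw₁ : 2 * w₁ = c - a * e) (hw₂ : 2 * w₂ = c + a * e) :
    minimalPrimes (quadQuot R a b c d) =
      { Ideal.span {Ideal.Quotient.mk (quadIdeal R a b c d)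
          (X 1 - C e * X 0 - C w₁)},
        Ideal.span {Ideal.Quotient.mk (quadIdeal R a b c d)
          (X 1 + C e * X 0 - C w₂)} } ∧
    Nonempty ((quadQuot R a b c d ⧸
        (Ideal.span {Ideal.Quotient.mk (quadIdeal R a b c d)
          (X 1 - C e * X 0 - C w₁)} : Ideal (quadQuot R a b c d))) ≃ₐ[R]
      AdjoinRoot (Polynomial.X ^ 2 - Polynomial.C a * Polynomial.X +
        Polynomial.C b : Polynomial R)) ∧
    Nonempty ((quadQuot R a b c d ⧸
        (Ideal.span {Ideal.Quotient.mk (quadIdeal R a b c d)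
          (X 1 + C e * X 0 - C w₂)} : Ideal (quadQuot R a b c d))) ≃ₐ[R]
      AdjoinRoot (Polynomial.X ^ 2 - Polynomial.C a * Polynomial.X +
        Polynomial.C b : Polynomial R)) := by
  classical
  have h2R : (2 : R) ≠ 0 := by
    intro h
    have h2K : ((2 : ℕ) : FractionRing R) = 0 := by
      have h' := congrArg (algebraMap R (FractionRing R)) h
      rw [map_ofNat, map_zero] at h'
      exact_mod_cast h'
    have hdvd : ringChar (FractionRing R) ∣ 2 := ringChar.dvd h2K
    rcases (Nat.dvd_prime Nat.prime_two).mp hdvd with h1 | h1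
    · exact CharP.ringChar_ne_one h1
    · exact hchar h1
  have hf' : Irreducible (fp a b) := hf
  have hc : c = 2 * w₁ + a * e := by linear_combination -hw₁
  subst hc
  have hv : w₂ = w₁ + a * e := by
    refine mul_left_cancel₀ h2R ?_
    linear_combination hw₂
  subst hv
  have h4 : (4 : R) ≠ 0 := by
    intro h
    exact h2R (by rcases mul_eq_zero.mp (show (2:R) * 2 = 0 by linear_combination h) with h' | h' <;> exact h')
  have hdd : d = w₁ * w₁ + a * e * w₁ + e ^ 2 * b := by
    refine mul_left_cancel₀ h4 ?_
    linear_combination -he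
  subst hdd
  have hrw : (X 1 + C e * X 0 - C (w₁ + a * e) : MvPolynomial (Fin 2) R)
      = X 1 - C (-e) * X 0 - C (w₁ + a * e) := by rw [map_neg]; ring
  rw [hrw]
  set F : MvPolynomial (Fin 2) R := X 0 ^ 2 - C a * X 0 + C b with hF
  set G : MvPolynomial (Fin 2) R :=
    X 1 ^ 2 - C (2 * w₁ + a * e) * X 1 + C (w₁ * w₁ + a * e * w₁ + e ^ 2 * b) with hG
  set H₁ : MvPolynomial (Fin 2) R := X 1 - C e * X 0 - C w₁ with hH₁
  set H₂ : MvPolynomial (Fin 2) R := X 1 - C (-e) * X 0 - C (w₁ + a * e) with hH₂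
  set Iq : Ideal (MvPolynomial (Fin 2) R) :=
    quadIdeal R a b (2 * w₁ + a * e) (w₁ * w₁ + a * e * w₁ + e ^ 2 * b) with hIq
  have hGid : G = H₁ * H₂ + C (e ^ 2) * F := by
    rw [hG, hH₁, hH₂, hF]
    simp only [map_add, map_mul, map_pow, map_sub, map_neg, map_ofNat]
    ring
  have hFmem1 : F ∈ Ideal.span {F, H₁} := Ideal.subset_span (Set.mem_insert _ _)
  have hHmem1 : H₁ ∈ Ideal.span {F, H₁} := Ideal.subset_span (Set.mem_insert_of_mem _ rfl)
  have hFmem2 : F ∈ Ideal.span {F, H₂} := Ideal.subset_span (Set.mem_insert _ _)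
  have hHmem2 : H₂ ∈ Ideal.span {F, H₂} := Ideal.subset_span (Set.mem_insert_of_mem _ rfl)
  have hG1 : G ∈ Ideal.span {F, H₁} := by
    rw [hGid]
    exact add_mem (Ideal.mul_mem_right _ _ hHmem1) (Ideal.mul_mem_left _ _ hFmem1)
  have hG2 : G ∈ Ideal.span {F, H₂} := by
    rw [hGid]
    exact add_mem (Ideal.mul_mem_left _ _ hHmem2) (Ideal.mul_mem_left _ _ hFmem2)
  have hP1 : (Ideal.span {Ideal.Quotient.mk Iq H₁} :
      Ideal (MvPolynomial (Fin 2) R ⧸ Iq)).IsPrime :=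
    span_mk_isPrime a b _ _ e w₁ hf' hG1
  have hP2 : (Ideal.span {Ideal.Quotient.mk Iq H₂} :
      Ideal (MvPolynomial (Fin 2) R ⧸ Iq)).IsPrime :=
    span_mk_isPrime a b _ _ (-e) (w₁ + a * e) hf' hG2
  have hFIq : F ∈ Iq := Ideal.subset_span (Set.mem_insert _ _)
  have hGIq : G ∈ Iq := Ideal.subset_span (Set.mem_insert_of_mem _ rfl)
  have hprod : Ideal.Quotient.mk Iq H₁ * Ideal.Quotient.mk Iq H₂ = 0 := by
    rw [← map_mul, Ideal.Quotient.eq_zero_iff_mem]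
    have h12 : H₁ * H₂ = G - C (e ^ 2) * F := by rw [hGid]; ring
    rw [h12]
    exact sub_mem hGIq (Ideal.mul_mem_left _ _ hFIq)
  have hcase21 : Ideal.Quotient.mk Iq H₂ ∈ Ideal.span {Ideal.Quotient.mk Iq H₁} →
      Ideal.Quotient.mk Iq H₂ = Ideal.Quotient.mk Iq H₁ := by
    intro hmem
    have hmem' := mem_of_mk_mem a b _ _ e w₁ H₂ hG1 hmem
    have h0 : phi a b e w₁ H₂ = 0 := span_le_ker a b e w₁ hmem'
    rw [hH₂, phi_lin] at h0
    have he0 : e - -e = 0 := eq_zero_of_mk_lin_eq_zero a b _ _ h0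
    have he0' : e = 0 := by
      refine mul_left_cancel₀ h2R ?_
      linear_combination he0
    apply congrArg
    rw [hH₁, hH₂, he0']
    norm_num
  have hcase12 : Ideal.Quotient.mk Iq H₁ ∈ Ideal.span {Ideal.Quotient.mk Iq H₂} →
      Ideal.Quotient.mk Iq H₁ = Ideal.Quotient.mk Iq H₂ := by
    intro hmem
    have hmem' := mem_of_mk_mem a b _ _ (-e) (w₁ + a * e) H₁ hG2 hmem
    have h0 : phi a b (-e) (w₁ + a * e) H₁ = 0 := span_le_ker a b (-e) (w₁ + a * e) hmem'
    rw [hH₁, phi_lin] at h0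
    have he0 : -e - e = 0 := eq_zero_of_mk_lin_eq_zero a b _ _ h0
    have he0' : e = 0 := by
      refine mul_left_cancel₀ h2R ?_
      linear_combination -he0
    apply congrArg
    rw [hH₁, hH₂, he0']
    norm_num
  have fact1 : ∀ Q : Ideal (MvPolynomial (Fin 2) R ⧸ Iq), Q.IsPrime →
      Q ≤ Ideal.span {Ideal.Quotient.mk Iq H₁} → Ideal.Quotient.mk Iq H₁ ∈ Q := by
    intro Q hQ hle
    rcases hQ.mem_or_mem (show Ideal.Quotient.mk Iq H₁ * Ideal.Quotient.mk Iq H₂ ∈ Q by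
      rw [hprod]; exact Q.zero_mem) with h | h
    · exact h
    · exact hcase21 (hle h) ▸ h
  have fact2 : ∀ Q : Ideal (MvPolynomial (Fin 2) R ⧸ Iq), Q.IsPrime →
      Q ≤ Ideal.span {Ideal.Quotient.mk Iq H₂} → Ideal.Quotient.mk Iq H₂ ∈ Q := by
    intro Q hQ hle
    rcases hQ.mem_or_mem (show Ideal.Quotient.mk Iq H₁ * Ideal.Quotient.mk Iq H₂ ∈ Q by
      rw [hprod]; exact Q.zero_mem) with h | h
    · exact hcase12 (hle h) ▸ h
    · exact h
  have hmem_iff : ∀ P : Ideal (MvPolynomial (Fin 2) R ⧸ Iq),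
      P ∈ minimalPrimes (MvPolynomial (Fin 2) R ⧸ Iq) ↔
      P.IsPrime ∧ ∀ Q : Ideal (MvPolynomial (Fin 2) R ⧸ Iq), Q.IsPrime → Q ≤ P → P ≤ Q := by
    intro P
    constructor
    · rintro ⟨⟨hP, -⟩, hmin⟩
      exact ⟨hP, fun Q hQ hle => hmin ⟨hQ, bot_le⟩ hle⟩
    · rintro ⟨hP, hmin⟩
      exact ⟨⟨hP, bot_le⟩, fun Q hQ hle => hmin Q hQ.1 hle⟩
  refine ⟨?_, ⟨quotQuotEquiv a b _ _ e w₁ hG1⟩, ⟨quotQuotEquiv a b _ _ (-e) (w₁ + a * e) hG2⟩⟩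
  ext P
  rw [hmem_iff P, Set.mem_insert_iff, Set.mem_singleton_iff]
  constructor
  · rintro ⟨hP, hmin⟩
    rcases hP.mem_or_mem (show Ideal.Quotient.mk Iq H₁ * Ideal.Quotient.mk Iq H₂ ∈ P by
      rw [hprod]; exact P.zero_mem) with h | h
    · left
      exact le_antisymm
        (hmin _ hP1 ((Ideal.span_singleton_le_iff_mem _).mpr h))
        ((Ideal.span_singleton_le_iff_mem _).mpr h)
    · right
      exact le_antisymm
        (hmin _ hP2 ((Ideal.span_singleton_le_iff_mem _).mpr h))
        ((Ideal.span_singleton_le_iff_mem _).mpr h)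
  · rintro (rfl | rfl)
    · exact ⟨hP1, fun Q hQ hle =>
        (Ideal.span_singleton_le_iff_mem _).mpr (fact1 Q hQ hle)⟩
    · exact ⟨hP2, fun Q hQ hle =>
        (Ideal.span_singleton_le_iff_mem _).mpr (fact2 Q hQ hle)⟩
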